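/- Let n be an odd prime and let C̃ be a binary linear code of length n+1, coordinates indexed by GF(n) ∪ {∞}, with C̃ ≠ GF(2)^{n+1}, invariant under PSL₂(n). Then the punctured code C of C̃ at the coordinate ∞ is a cyclic code of length n (under the identification of coordinate positions with Z/nZ), and dim(C) = dim(C̃), and C̃ equals the extended code of C (where the extended coordinate equals the sum of the other coordinates). -/

import Mathlib

/-- The fractional linear transformation `τ_{(a,b,c,d)} : x ↦ (ax+c)/(bx+d)` on the
projective line `GF(n) ∪ {∞}` (with `∞` modelled as `none`). -/
def mobius (n : ℕ) (a b c d : ZMod n) : Option (ZMod n) → Option (ZMod n)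
  | none => if b = 0 then none else some (a * b⁻¹)
  | some x => if b * x + d = 0 then none else some ((a * x + c) * (b * x + d)⁻¹)

/-- The translation `x ↦ x + b`, `∞ ↦ ∞` as a Möbius map. -/
lemma mobius_translation (n : ℕ) [Fact (Nat.Prime n)] (b : ZMod n) (p : Option (ZMod n)) :
    mobius n 1 0 b 1 p = Option.map (· + b) p := by
  cases p with
  | none => simp [mobius]
  | some x => simp [mobius, one_ne_zero]

/-- The parity (overall even weight) of every codeword in a proper `PSL₂`-invariant code. -/
lemma key_parity (n : ℕ) [Fact (Nat.Prime n)] (hodd : Odd n)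
    (Ct : Submodule (ZMod 2) (Option (ZMod n) → ZMod 2)) (hne : Ct ≠ ⊤)
    (hinv : ∀ a b c d : ZMod n, a * d - b * c = 1 →
      ∀ v ∈ Ct, (fun p => v (mobius n a b c d p)) ∈ Ct) :
    ∀ v ∈ Ct, v none = ∑ i : ZMod n, v (some i) := by
  have hn1 : (n : ZMod 2) = 1 := by
    obtain ⟨k, hk⟩ := hodd
    have : ((2 * k + 1 : ℕ) : ZMod 2) = 1 := by push_cast; rw [show (2 : ZMod 2) = 0 from rfl]; ring
    rwa [hk]
  have z2a : ∀ e : ZMod 2, 1 + e * 2 = 1 := by decide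
  have z2b : ∀ e : ZMod 2, e + e = 0 := by decide
  have z2c : ∀ e : ZMod 2, e + (1 + e) = 1 := by decide
  have z2d : ∀ e : ZMod 2, (1 + e) + e = 1 := by decide
  by_contra hcon
  push_neg at hcon
  obtain ⟨u, hu, hune⟩ := hcon
  apply hne
  set ε := u none with hε
  set s := ∑ i : ZMod n, u (some i) with hs
  have hse : s = 1 + ε := by
    have h2 : ∀ a b : ZMod 2, a ≠ b → b = 1 + a := by decide
    exact h2 ε s hune
  -- the averaged word over all translations
  set w : Option (ZMod n) → ZMod 2 :=
    ∑ b : ZMod n, (fun p => u (mobius n 1 0 b 1 p)) with hw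
  have hwmem : w ∈ Ct :=
    Submodule.sum_mem _ fun b _ => hinv 1 0 b 1 (by ring) u hu
  have hwnone : w none = ε := by
    rw [hw, Finset.sum_apply]
    simp only [mobius_translation, Option.map_none]
    rw [Finset.sum_const, Finset.card_univ, ZMod.card]
    rw [nsmul_eq_mul, hn1, one_mul]
  have hwsome : ∀ y : ZMod n, w (some y) = s := by
    intro y
    rw [hw, Finset.sum_apply]
    simp only [mobius_translation, Option.map_some]
    rw [hs]
    exact Equiv.sum_comp (Equiv.addLeft y) fun x => u (some x)
  -- for every x, the word `e_∞ + e_{some x}` is in Ct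
  have hpair : ∀ x : ZMod n,
      (fun p : Option (ZMod n) => if p = none ∨ p = some x then (1 : ZMod 2) else 0) ∈ Ct := by
    intro x
    have hdet : (0 : ZMod n) * (-x) - 1 * (-1) = 1 := by ring
    have hg := hinv 0 1 (-1) (-x) hdet w hwmem
    have heq : (fun p : Option (ZMod n) => if p = none ∨ p = some x then (1 : ZMod 2) else 0)
        = w + (fun p => w (mobius n 0 1 (-1) (-x) p)) := by
      funext p
      cases p with
      | none =>
        have hgn : mobius n 0 1 (-1) (-x) none = some (0 * 1⁻¹) := by
          simp only [mobius]
          rw [if_neg (one_ne_zero : (1 : ZMod n) ≠ 0)]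
        simp only [Pi.add_apply, hgn, hwnone, hwsome]
        simp only [true_or, if_true]
        rw [hse]
        exact (z2c ε).symm
      | some y =>
        by_cases hyx : y = x
        · subst hyx
          have hgn : mobius n 0 1 (-1) (-y) (some y) = none := by
            simp only [mobius]
            rw [if_pos (by ring : (1 : ZMod n) * y + -y = 0)]
          simp only [Pi.add_apply, hgn, hwnone, hwsome]
          simp only [or_true, if_true]
          rw [hse]
          exact (z2d ε).symm
        · have hne0 : (1 : ZMod n) * y + -x ≠ 0 := by
            intro h
            exact hyx (by linear_combination h)
          have hgn : mobius n 0 1 (-1) (-x) (some y)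
              = some ((0 * y + -1) * ((1 : ZMod n) * y + -x)⁻¹) := by
            simp only [mobius]
            rw [if_neg hne0]
          simp only [Pi.add_apply, hgn, hwsome]
          rw [if_neg (by simp [hyx])]
          exact (z2b s).symm
    rw [heq]
    exact Submodule.add_mem _ hwmem hg
  -- the all-ones vector is in Ct
  have hones : (fun _ : Option (ZMod n) => (1 : ZMod 2)) ∈ Ct := by
    have hsum : (fun _ : Option (ZMod n) => (1 : ZMod 2))
        = ∑ x : ZMod n, (fun p : Option (ZMod n) =>
            if p = none ∨ p = some x then (1 : ZMod 2) else 0) := by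
      funext p
      rw [Finset.sum_apply]
      cases p with
      | none =>
        simp only [true_or, if_true]
        rw [Finset.sum_const, Finset.card_univ, ZMod.card, nsmul_eq_mul, hn1, one_mul]
      | some y =>
        simp only [reduceCtorEq, false_or, Option.some.injEq]
        rw [Finset.sum_ite_eq Finset.univ y (fun _ => (1 : ZMod 2))]
        simp
    rw [hsum]
    exact Submodule.sum_mem _ fun x _ => hpair x
  -- e_∞ ∈ Ct
  have hinfty : (fun p : Option (ZMod n) => if p = none then (1 : ZMod 2) else 0) ∈ Ct := by
    have heq : (fun p : Option (ZMod n) => if p = none then (1 : ZMod 2) else 0)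
        = w + (1 + ε) • (fun _ : Option (ZMod n) => (1 : ZMod 2)) := by
      funext p
      cases p with
      | none =>
        simp only [Pi.add_apply, Pi.smul_apply, hwnone, smul_eq_mul, mul_one, if_pos rfl]
        have : ∀ e : ZMod 2, e + (1 + e) = 1 := by decide
        exact (this ε).symm
      | some y =>
        simp only [Pi.add_apply, Pi.smul_apply, hwsome, smul_eq_mul, mul_one, hse,
          reduceCtorEq, if_false]
        have : ∀ e : ZMod 2, 1 + e + (1 + e) = 0 := by decide
        exact (this ε).symm
    rw [heq]
    exact Submodule.add_mem _ hwmem (Submodule.smul_mem _ _ hones)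
  -- every standard basis vector is in Ct
  have hbasis : ∀ q : Option (ZMod n),
      (fun p : Option (ZMod n) => if p = q then (1 : ZMod 2) else 0) ∈ Ct := by
    intro q
    cases q with
    | none => exact hinfty
    | some x =>
      have heq : (fun p : Option (ZMod n) => if p = some x then (1 : ZMod 2) else 0)
          = (fun p : Option (ZMod n) => if p = none ∨ p = some x then (1 : ZMod 2) else 0)
            + (fun p : Option (ZMod n) => if p = none then (1 : ZMod 2) else 0) := by
        funext p
        cases p with
        | none => simp only [Pi.add_apply, reduceCtorEq, true_or, if_true, if_false]; decide
        | some y =>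
          by_cases hyx : y = x <;>
            simp [hyx]
      rw [heq]
      exact Submodule.add_mem _ (hpair x) hinfty
  -- hence Ct = ⊤
  rw [eq_top_iff]
  intro v _
  rw [pi_eq_sum_univ v]
  refine Submodule.sum_mem _ fun q _ => Submodule.smul_mem _ _ ?_
  have : (fun j : Option (ZMod n) => if q = j then (1 : ZMod 2) else 0)
      = (fun p : Option (ZMod n) => if p = q then (1 : ZMod 2) else 0) := by
    funext j; by_cases h : q = j
    · simp [h]
    · simp [h, Ne.symm h, ne_comm.mp h]
  rw [this]
  exact hbasis q

/-- Let `n` be an odd prime and `C̃` a binary linear code of length `n+1`, coordinates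
indexed by `GF(n) ∪ {∞}`, with `C̃ ≠ GF(2)^{n+1}`, invariant under `PSL₂(n)`. Then the
punctured code `C` of `C̃` at `∞` is cyclic, `dim C = dim C̃`, and `C̃` is the extended
code of `C` (the extended coordinate being the sum of the other coordinates). -/
theorem punctured_code_cyclic_and_extended (n : ℕ) [Fact (Nat.Prime n)] (hodd : Odd n)
    (Ct : Submodule (ZMod 2) (Option (ZMod n) → ZMod 2)) (hne : Ct ≠ ⊤)
    (hinv : ∀ a b c d : ZMod n, a * d - b * c = 1 →
      ∀ v ∈ Ct, (fun p => v (mobius n a b c d p)) ∈ Ct)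
    (C : Submodule (ZMod 2) (ZMod n → ZMod 2))
    (hC : C = Ct.map (LinearMap.funLeft (ZMod 2) (ZMod 2) (some : ZMod n → Option (ZMod n)))) :
    (∀ c ∈ C, (fun i : ZMod n => c (i + 1)) ∈ C) ∧
    Module.finrank (ZMod 2) C = Module.finrank (ZMod 2) Ct ∧
    ∀ v : Option (ZMod n) → ZMod 2,
      v ∈ Ct ↔ ((fun i : ZMod n => v (some i)) ∈ C ∧ v none = ∑ i : ZMod n, v (some i)) := by
  have hkey := key_parity n hodd Ct hne hinv
  refine ⟨?_, ?_, ?_⟩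
  · -- cyclicity
    intro c hc
    rw [hC] at hc ⊢
    obtain ⟨v, hv, rfl⟩ := hc
    refine ⟨fun p => v (mobius n 1 0 1 1 p), hinv 1 0 1 1 (by ring) v hv, ?_⟩
    funext i
    simp [LinearMap.funLeft_apply, mobius_translation]
  · -- dimensions
    set f := (LinearMap.funLeft (ZMod 2) (ZMod 2) (some : ZMod n → Option (ZMod n)))
    have hker : LinearMap.ker (f.domRestrict Ct) = ⊥ := by
      rw [LinearMap.ker_eq_bot']
      rintro ⟨v, hv⟩ hfv
      have hfv' : ∀ i : ZMod n, v (some i) = 0 := by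
        intro i
        simpa [f, LinearMap.domRestrict_apply, LinearMap.funLeft_apply] using congrFun hfv i
      have hnone : v none = 0 := by
        rw [hkey v hv]
        simp [hfv']
      apply Subtype.ext
      funext p
      cases p with
      | none => exact hnone
      | some i => exact hfv' i
    have hrange : LinearMap.range (f.domRestrict Ct) = C := by
      rw [LinearMap.range_domRestrict, hC]
    have := LinearMap.finrank_range_add_finrank_ker (f.domRestrict Ct)
    rw [hker, hrange] at this
    simpa using this
  · -- extension
    intro v
    constructor
    · intro hv
      refine ⟨?_, hkey v hv⟩
      rw [hC]
      exact ⟨v, hv, rfl⟩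
    · rintro ⟨hvC, hvsum⟩
      rw [hC] at hvC
      obtain ⟨u, hu, hueq⟩ := hvC
      have husome : ∀ i : ZMod n, u (some i) = v (some i) := fun i => congrFun hueq i
      have hunone : u none = v none := by
        rw [hkey u hu, hvsum]
        exact Finset.sum_congr rfl fun i _ => husome i
      have : u = v := by
        funext p
        cases p with
        | none => exact hunone
        | some i => exact husome i
      rwa [← this]
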